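/- Let n ≥ 2 be a natural number. The n-th Kolmogorov number of the Volterra operator V : L¹(0,1) → C[0,1] equals 1/2, i.e., the infimum over all subspaces N of C[0,1] with dimension < n of sup{inf{‖Vf − g‖_∞ : g ∈ N} : ‖f‖₁ ≤ 1} equals 1/2. -/

import Mathlib

open MeasureTheory

noncomputable section

/-- The space `L¹(0,1)` of Lebesgue integrable functions on `(0,1)`. -/
abbrev L1 : Type := Lp ℝ 1 ((volume : Measure ℝ).restrict (Set.Ioo (0:ℝ) 1))

/-- The space `C[0,1]` of continuous real functions on `[0,1]` with the supremum norm. -/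
abbrev C01 : Type := C(Set.Icc (0:ℝ) 1, ℝ)

/-- `V` is the Volterra operator: `(V f)(t) = ∫₀ᵗ f(s) ds` for `f ∈ L¹(0,1)`. -/
def IsVolterra (V : L1 →L[ℝ] C01) : Prop :=
  ∀ f : L1, ∀ t : Set.Icc (0:ℝ) 1,
    V f t = ∫ s in Set.Ioo (0:ℝ) (t:ℝ), f s
      ∂((volume : Measure ℝ).restrict (Set.Ioo (0:ℝ) 1))

lemma jump_fin (a b : ℝ) : ((volume : Measure ℝ).restrict (Set.Ioo (0:ℝ) 1)) (Set.Ioo a b) ≠ ⊤ := by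
  rw [Measure.restrict_apply measurableSet_Ioo]
  exact ne_top_of_le_ne_top (by simp [Real.volume_Ioo]) (measure_mono Set.inter_subset_left)

/-- A normalized indicator of `Ioo a b` as an element of `L1`. -/
def jump (a b : ℝ) : L1 :=
  indicatorConstLp 1 measurableSet_Ioo (jump_fin a b) ((b - a)⁻¹ : ℝ)

lemma jump_measure {a b : ℝ} (h0 : 0 ≤ a) (hb1 : b ≤ 1) :
    ((volume : Measure ℝ).restrict (Set.Ioo (0:ℝ) 1)) (Set.Ioo a b) = ENNReal.ofReal (b - a) := by
  rw [Measure.restrict_apply measurableSet_Ioo,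
    Set.inter_eq_left.mpr (Set.Ioo_subset_Ioo h0 hb1), Real.volume_Ioo]

lemma jump_norm {a b : ℝ} (h0 : 0 ≤ a) (hab : a < b) (hb1 : b ≤ 1) : ‖jump a b‖ = 1 := by
  rw [jump, norm_indicatorConstLp one_ne_zero ENNReal.one_ne_top, measureReal_def, jump_measure h0 hb1]
  have hba : 0 < b - a := by linarith
  rw [ENNReal.toReal_ofReal hba.le]
  rw [Real.norm_eq_abs, ENNReal.toReal_one, abs_inv, abs_of_pos hba]
  simp [inv_mul_cancel₀ hba.ne']

lemma jump_integral (a b u : ℝ) :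
    (∫ s in Set.Ioo (0:ℝ) u, (jump a b) s ∂((volume : Measure ℝ).restrict (Set.Ioo (0:ℝ) 1)))
      = (((volume : Measure ℝ).restrict (Set.Ioo (0:ℝ) 1)) (Set.Ioo a b ∩ Set.Ioo 0 u)).toReal
          * (b - a)⁻¹ := by
  rw [jump, setIntegral_indicatorConstLp measurableSet_Ioo measurableSet_Ioo (jump_fin a b)]
  simp [smul_eq_mul]; exact Or.inl rfl

lemma jump_integral_zero {a b u : ℝ} (hu : u ≤ a) :
    (∫ s in Set.Ioo (0:ℝ) u, (jump a b) s
      ∂((volume : Measure ℝ).restrict (Set.Ioo (0:ℝ) 1))) = 0 := by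
  rw [jump_integral]
  have : Set.Ioo a b ∩ Set.Ioo 0 u = ∅ := by
    ext x; simp only [Set.mem_inter_iff, Set.mem_Ioo, Set.mem_empty_iff_false, iff_false]
    rintro ⟨⟨h1, _⟩, _, h4⟩; linarith
  simp [this]

lemma jump_integral_one {a b u : ℝ} (h0 : 0 ≤ a) (hab : a < b) (hbu : b ≤ u) (hb1 : b ≤ 1) :
    (∫ s in Set.Ioo (0:ℝ) u, (jump a b) s
      ∂((volume : Measure ℝ).restrict (Set.Ioo (0:ℝ) 1))) = 1 := by
  rw [jump_integral]
  have : Set.Ioo a b ∩ Set.Ioo 0 u = Set.Ioo a b := by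
    apply Set.inter_eq_left.mpr
    intro x hx
    exact ⟨lt_of_le_of_lt h0 hx.1, lt_of_lt_of_le hx.2 hbu⟩
  rw [this, jump_measure h0 hb1, ENNReal.toReal_ofReal (by linarith)]
  exact mul_inv_cancel₀ (by linarith)

lemma volterra_abs_diff_le (f : L1) (a b : ℝ) :
    |(∫ s in Set.Ioo (0:ℝ) b, f s ∂((volume : Measure ℝ).restrict (Set.Ioo (0:ℝ) 1)))
      - (∫ s in Set.Ioo (0:ℝ) a, f s ∂((volume : Measure ℝ).restrict (Set.Ioo (0:ℝ) 1)))|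
        ≤ ‖f‖ := by
  set μ := (volume : Measure ℝ).restrict (Set.Ioo (0:ℝ) 1) with hμ
  have hint : Integrable f μ := L1.integrable_coeFn f
  have key : ∀ u v : ℝ, u ≤ v →
      |(∫ s in Set.Ioo (0:ℝ) v, f s ∂μ) - (∫ s in Set.Ioo (0:ℝ) u, f s ∂μ)| ≤ ‖f‖ := by
    intro u v huv
    have hsub : Set.Ioo (0:ℝ) u ⊆ Set.Ioo 0 v := Set.Ioo_subset_Ioo le_rfl huv
    have hdiff := integral_diff (measurableSet_Ioo (a := (0:ℝ)) (b := u)) hint.integrableOn hsub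
    rw [← hdiff]
    calc |∫ s in Set.Ioo (0:ℝ) v \ Set.Ioo 0 u, f s ∂μ|
        ≤ ∫ s in Set.Ioo (0:ℝ) v \ Set.Ioo 0 u, ‖f s‖ ∂μ := by
          rw [← Real.norm_eq_abs]; exact norm_integral_le_integral_norm _
      _ ≤ ∫ s, ‖f s‖ ∂μ := setIntegral_le_integral hint.norm
          (Filter.Eventually.of_forall (fun x => norm_nonneg _))
      _ = ‖f‖ := (L1.norm_eq_integral_norm f).symm
  rcases le_total a b with h | h
  · exact key a b h
  · rw [abs_sub_comm]; exact key b a h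

/-- Upper bound: any `V f` with `‖f‖ ≤ 1` is within `1/2` of a constant. -/
lemma volterra_close_to_const (V : L1 →L[ℝ] C01) (hV : IsVolterra V)
    (f : L1) (hf : ‖f‖ ≤ 1) : ∃ c : ℝ, ‖V f - c • ContinuousMap.const _ 1‖ ≤ 1/2 := by
  obtain ⟨u₁, -, hmax'⟩ := isCompact_univ.exists_isMaxOn (Set.univ_nonempty)
    ((V f).continuous.continuousOn (s := Set.univ))
  obtain ⟨u₂, -, hmin'⟩ := isCompact_univ.exists_isMinOn (Set.univ_nonempty)
    ((V f).continuous.continuousOn (s := Set.univ))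
  have hmax : ∀ t, V f t ≤ V f u₁ := fun t => hmax' (Set.mem_univ t)
  have hmin : ∀ t, V f u₂ ≤ V f t := fun t => hmin' (Set.mem_univ t)
  have hosc : V f u₁ - V f u₂ ≤ 1 := by
    have := volterra_abs_diff_le f (u₂ : ℝ) (u₁ : ℝ)
    rw [← hV f u₁, ← hV f u₂] at this
    exact le_trans (le_trans (le_abs_self _) this) hf
  refine ⟨(V f u₁ + V f u₂) / 2, ?_⟩
  rw [ContinuousMap.norm_le _ (by norm_num)]
  intro t
  have h1 : V f t ≤ V f u₁ := hmax t
  have h2 : V f u₂ ≤ V f t := hmin t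
  simp only [ContinuousMap.sub_apply, ContinuousMap.smul_apply, ContinuousMap.const_apply,
    smul_eq_mul, mul_one, Real.norm_eq_abs]
  rw [abs_le]
  constructor <;> linarith

lemma close_pair (N : Submodule ℝ C01) (hfd : FiniteDimensional ℝ N)
    (g : ℕ → C01) (hg : ∀ k, g k ∈ N) (R : ℝ) (hR : ∀ k, ‖g k‖ ≤ R)
    {η : ℝ} (hη : 0 < η) : ∃ k l : ℕ, k < l ∧ ‖g k - g l‖ < η := by
  haveI : ProperSpace N := FiniteDimensional.proper ℝ N
  set G : ℕ → N := fun k => ⟨g k, hg k⟩ with hG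
  have hGb : ∀ k, G k ∈ Metric.closedBall (0 : N) R := by
    intro k
    rw [Metric.mem_closedBall, dist_zero_right]
    exact hR k
  obtain ⟨a, -, φ, hφ, hconv⟩ := (isCompact_closedBall (0:N) R).tendsto_subseq hGb
  obtain ⟨M, hM⟩ := (Metric.tendsto_atTop.mp hconv) (η/2) (by linarith)
  refine ⟨φ M, φ (M+1), hφ (Nat.lt_succ_self M), ?_⟩
  have h1 := hM M le_rfl
  have h2 := hM (M+1) (Nat.le_succ M)
  have hd : dist (G (φ M)) (G (φ (M+1))) < η := by
    calc dist (G (φ M)) (G (φ (M+1))) ≤ dist (G (φ M)) a + dist (G (φ (M+1))) a :=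
          dist_triangle_right _ _ _
      _ < η/2 + η/2 := add_lt_add h1 h2
      _ = η := by ring
  rw [← dist_eq_norm]
  exact hd

/-- The `n`-th Kolmogorov number of the Volterra operator `V : L¹(0,1) → C[0,1]`
equals `1/2` for `n ≥ 2`. -/
theorem kolmogorov_number_volterra (n : ℕ) (hn : 2 ≤ n)
    (V : L1 →L[ℝ] C01) (hV : IsVolterra V) :
    sInf {r : ℝ | ∃ N : Submodule ℝ C01, Module.rank ℝ N < (n : Cardinal) ∧
        r = sSup {s : ℝ | ∃ f : L1, ‖f‖ ≤ 1 ∧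
          s = sInf {d : ℝ | ∃ g ∈ N, d = ‖V f - g‖}}} = 1 / 2 := by
  -- notation
  set BigSet := {r : ℝ | ∃ N : Submodule ℝ C01, Module.rank ℝ N < (n : Cardinal) ∧
        r = sSup {s : ℝ | ∃ f : L1, ‖f‖ ≤ 1 ∧
          s = sInf {d : ℝ | ∃ g ∈ N, d = ‖V f - g‖}}} with hBigSet
  -- basic facts about the inner sets
  have hD_ne : ∀ (N : Submodule ℝ C01) (f : L1),
      {d : ℝ | ∃ g ∈ N, d = ‖V f - g‖}.Nonempty :=
    fun N f => ⟨‖V f - 0‖, 0, N.zero_mem, rfl⟩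
  have hD_bdd : ∀ (N : Submodule ℝ C01) (f : L1),
      BddBelow {d : ℝ | ∃ g ∈ N, d = ‖V f - g‖} := by
    rintro N f
    exact ⟨0, by rintro d ⟨g, -, rfl⟩; exact norm_nonneg _⟩
  have hS_nonneg : ∀ (N : Submodule ℝ C01) (s : ℝ),
      s ∈ {s : ℝ | ∃ f : L1, ‖f‖ ≤ 1 ∧ s = sInf {d : ℝ | ∃ g ∈ N, d = ‖V f - g‖}} → 0 ≤ s := by
    rintro N s ⟨f, hf, rfl⟩
    exact le_csInf (hD_ne N f) (by rintro d ⟨g, -, rfl⟩; exact norm_nonneg _)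
  have hS_le : ∀ (N : Submodule ℝ C01) (s : ℝ),
      s ∈ {s : ℝ | ∃ f : L1, ‖f‖ ≤ 1 ∧ s = sInf {d : ℝ | ∃ g ∈ N, d = ‖V f - g‖}} → s ≤ ‖V‖ := by
    rintro N s ⟨f, hf, rfl⟩
    have h1 : ‖V f - 0‖ ≤ ‖V‖ := by
      rw [sub_zero]
      calc ‖V f‖ ≤ ‖V‖ * ‖f‖ := V.le_opNorm f
        _ ≤ ‖V‖ * 1 := by
            exact mul_le_mul_of_nonneg_left hf (norm_nonneg V)
        _ = ‖V‖ := mul_one _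
    exact le_trans (csInf_le (hD_bdd N f) ⟨0, N.zero_mem, rfl⟩) h1
  have hS_ne : ∀ (N : Submodule ℝ C01),
      {s : ℝ | ∃ f : L1, ‖f‖ ≤ 1 ∧ s = sInf {d : ℝ | ∃ g ∈ N, d = ‖V f - g‖}}.Nonempty :=
    fun N => ⟨_, 0, by simp, rfl⟩
  have hS_bddAbove : ∀ (N : Submodule ℝ C01),
      BddAbove {s : ℝ | ∃ f : L1, ‖f‖ ≤ 1 ∧ s = sInf {d : ℝ | ∃ g ∈ N, d = ‖V f - g‖}} :=
    fun N => ⟨‖V‖, fun s hs => hS_le N s hs⟩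
  -- the subspace of constants
  set c₀ : C01 := ContinuousMap.const _ (1:ℝ) with hc₀
  set N₀ : Submodule ℝ C01 := Submodule.span ℝ {c₀} with hN₀
  have hrank₀ : Module.rank ℝ N₀ < (n : Cardinal) := by
    refine lt_of_le_of_lt (rank_span_le ({c₀} : Set C01)) ?_
    rw [Cardinal.mk_singleton]
    exact_mod_cast Nat.lt_of_lt_of_le one_lt_two hn
  have hr₀mem : sSup {s : ℝ | ∃ f : L1, ‖f‖ ≤ 1 ∧
      s = sInf {d : ℝ | ∃ g ∈ N₀, d = ‖V f - g‖}} ∈ BigSet := ⟨N₀, hrank₀, rfl⟩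
  have hBig_bddBelow : BddBelow BigSet := by
    refine ⟨0, ?_⟩
    rintro r ⟨N, -, rfl⟩
    obtain ⟨s, hs⟩ := hS_ne N
    exact le_trans (hS_nonneg N s hs) (le_csSup (hS_bddAbove N) hs)
  refine le_antisymm ?_ ?_
  · -- upper bound : sInf ≤ 1/2
    refine le_trans (csInf_le hBig_bddBelow hr₀mem) ?_
    refine Real.sSup_le ?_ (by norm_num)
    rintro s ⟨f, hf, rfl⟩
    obtain ⟨c, hc⟩ := volterra_close_to_const V hV f hf
    refine le_trans (csInf_le (hD_bdd N₀ f) ⟨c • c₀, ?_, rfl⟩) hc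
    exact Submodule.smul_mem _ c (Submodule.mem_span_singleton_self _)
  · -- lower bound : 1/2 ≤ sInf
    refine le_csInf ⟨_, hr₀mem⟩ ?_
    rintro r ⟨N, hrank, rfl⟩
    set SN := {s : ℝ | ∃ f : L1, ‖f‖ ≤ 1 ∧
      s = sInf {d : ℝ | ∃ g ∈ N, d = ‖V f - g‖}} with hSN
    by_contra hcon
    push_neg at hcon
    set r := sSup SN with hr
    have hr0 : 0 ≤ r := by
      obtain ⟨s, hs⟩ := hS_ne N
      exact le_trans (hS_nonneg N s hs) (le_csSup (hS_bddAbove N) hs)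
    set ρ : ℝ := (r + 1/2)/2 with hρ
    have hρlt : ρ < 1/2 := by rw [hρ]; linarith
    have hρpos : 0 < ρ := by rw [hρ]; linarith
    -- the jump functions
    set t : ℕ → ℝ := fun k => (1/2 : ℝ)^(k+1) with ht
    set b : ℕ → ℝ := fun k => (1/2 : ℝ)^(k+1) + (1/2 : ℝ)^(k+2) with hb
    have htpos : ∀ k, 0 < t k := fun k => pow_pos (by norm_num) _
    have htb : ∀ k, t k < b k := fun k => by
      simp only [ht, hb]; nlinarith [pow_pos (show (0:ℝ) < 1/2 by norm_num) (k+2)]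
    have hb1 : ∀ k, b k ≤ 1 := by
      intro k
      have h1 : (1/2 : ℝ)^(k+1) ≤ (1/2 : ℝ)^1 :=
        pow_le_pow_of_le_one (by norm_num) (by norm_num) (by omega)
      have h2 : (1/2 : ℝ)^(k+2) ≤ (1/2 : ℝ)^2 :=
        pow_le_pow_of_le_one (by norm_num) (by norm_num) (by omega)
      have := h1; have := h2
      simp only [hb]; norm_num at h1 h2; linarith
    have ht1 : ∀ k, t k ≤ 1 := fun k => le_trans (htb k).le (hb1 k)
    have hbt : ∀ k l, k < l → b l ≤ t k := by
      intro k l hkl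
      have h1 : (1/2 : ℝ)^(l+1) ≤ (1/2 : ℝ)^(k+2) :=
        pow_le_pow_of_le_one (by norm_num) (by norm_num) (by omega)
      have h2 : (1/2 : ℝ)^(l+2) ≤ (1/2 : ℝ)^(k+3) :=
        pow_le_pow_of_le_one (by norm_num) (by norm_num) (by omega)
      have e1 : (1/2 : ℝ)^(k+2) = (1/2 : ℝ)^(k+1) * (1/2) := by rw [pow_succ]
      have e2 : (1/2 : ℝ)^(k+3) = (1/2 : ℝ)^(k+1) * (1/4) := by
        rw [show k+3 = (k+1)+2 by omega, pow_add]; norm_num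
      have hp : 0 < (1/2 : ℝ)^(k+1) := pow_pos (by norm_num) _
      simp only [hb, ht]
      nlinarith
    set f : ℕ → L1 := fun k => jump (t k) (b k) with hf
    have hfnorm : ∀ k, ‖f k‖ = 1 := fun k => jump_norm (htpos k).le (htb k) (hb1 k)
    -- choose good approximants
    have hchoice : ∀ k : ℕ, ∃ g ∈ N, ‖V (f k) - g‖ < ρ := by
      intro k
      have hmem : sInf {d : ℝ | ∃ g ∈ N, d = ‖V (f k) - g‖} ∈ SN :=
        ⟨f k, (hfnorm k).le, rfl⟩
      have hle : sInf {d : ℝ | ∃ g ∈ N, d = ‖V (f k) - g‖} < ρ :=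
        lt_of_le_of_lt (le_csSup (hS_bddAbove N) hmem) (by rw [hρ]; linarith)
      obtain ⟨d, ⟨g, hgN, rfl⟩, hdlt⟩ := exists_lt_of_csInf_lt (hD_ne N (f k)) hle
      exact ⟨g, hgN, hdlt⟩
    choose g hgN hglt using hchoice
    -- their norms are bounded
    have hgbound : ∀ k, ‖g k‖ ≤ ‖V‖ + 1 := by
      intro k
      have h1 : ‖V (f k)‖ ≤ ‖V‖ := by
        calc ‖V (f k)‖ ≤ ‖V‖ * ‖f k‖ := V.le_opNorm _
          _ = ‖V‖ := by rw [hfnorm k, mul_one]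
      calc ‖g k‖ = ‖V (f k) - (V (f k) - g k)‖ := by ring_nf
        _ ≤ ‖V (f k)‖ + ‖V (f k) - g k‖ := norm_sub_le _ _
        _ ≤ ‖V‖ + 1 := add_le_add h1 (le_of_lt (lt_of_lt_of_le (hglt k) (by linarith)))
    -- finite dimensionality
    haveI hfd : FiniteDimensional ℝ N := IsNoetherian.iff_fg.1
      (IsNoetherian.iff_rank_lt_aleph0.2 (lt_trans hrank (Cardinal.nat_lt_aleph0 n)))
    obtain ⟨k, l, hkl, hclose⟩ := close_pair N hfd g hgN (‖V‖ + 1) hgbound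
      (show 0 < 1 - 2*ρ by linarith)
    -- evaluate at t k
    set T : Set.Icc (0:ℝ) 1 := ⟨t k, (htpos k).le, ht1 k⟩ with hT
    have hTval : (T : ℝ) = t k := rfl
    have hA : V (f k) T = 0 := by
      rw [hV (f k) T, hTval, hf]
      exact jump_integral_zero le_rfl
    have hB : V (f l) T = 1 := by
      rw [hV (f l) T, hTval, hf]
      exact jump_integral_one (htpos l).le (htb l) (hbt k l hkl) (hb1 l)
    -- final contradiction
    have e1 : |((V (f l) - g l) T)| ≤ ‖V (f l) - g l‖ :=
      (V (f l) - g l).norm_coe_le_norm T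
    have e2 : |((g l - g k) T)| ≤ ‖g l - g k‖ :=
      (g l - g k).norm_coe_le_norm T
    have e3 : |((g k - V (f k)) T)| ≤ ‖g k - V (f k)‖ :=
      (g k - V (f k)).norm_coe_le_norm T
    have hrev : ‖g k - V (f k)‖ = ‖V (f k) - g k‖ := norm_sub_rev _ _
    have hrev2 : ‖g l - g k‖ = ‖g k - g l‖ := norm_sub_rev _ _
    have hsum : V (f l) T - V (f k) T =
        (V (f l) - g l) T + (g l - g k) T + (g k - V (f k)) T := by
      simp only [ContinuousMap.sub_apply]; ring
    have : (1:ℝ) < 1 := by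
      have habs : |V (f l) T - V (f k) T| ≤
          ‖V (f l) - g l‖ + ‖g l - g k‖ + ‖g k - V (f k)‖ := by
        rw [hsum]
        calc |(V (f l) - g l) T + (g l - g k) T + (g k - V (f k)) T|
            ≤ |(V (f l) - g l) T + (g l - g k) T| + |(g k - V (f k)) T| := abs_add_le _ _
          _ ≤ |(V (f l) - g l) T| + |(g l - g k) T| + |(g k - V (f k)) T| := by
              have := abs_add_le ((V (f l) - g l) T) ((g l - g k) T)
              linarith
          _ ≤ ‖V (f l) - g l‖ + ‖g l - g k‖ + ‖g k - V (f k)‖ := by linarith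
      rw [hB, hA] at habs
      norm_num at habs
      calc (1:ℝ) ≤ ‖V (f l) - g l‖ + ‖g l - g k‖ + ‖g k - V (f k)‖ := habs
        _ < ρ + (1 - 2*ρ) + ρ := by
            rw [hrev, hrev2]
            have h1 := hglt l
            have h2 := hglt k
            linarith
        _ = 1 := by ring
    linarith
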